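/- Let T be an admissible tuple of type 1 or 2 with nonempty I_NS(T), let (W_q) be the canonical partition of I_NS(T), and fix u with W_u ≠ ∅. Let M_u^h be the number of multiedges of G_h' incident to W_u (h = 1,2), and let Y be the set of left vertices used by the switching from G₁' to G₂' (Y = ∅ if G₁' = G₂'). Then: if Y ∩ W_u = ∅, we have max(|W_u| − 2, 1) ≤ 2M_u¹ − 1 = 2M_u² − 1; if Y ∩ W_u ≠ ∅, then Y ⊆ W_u and |W_u| ≤ 2 + M_u¹ + M_u². In either case |W_u| ≤ 2 + M_u¹ + M_u². -/

import Mathlib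

open Finset

/-- A bipartite multigraph on `[n] ⊔ [m]` encoded by its adjacency (multiplicity) matrix. -/
def IsReg (n d : ℕ) (A : Fin n → Fin n → ℕ) : Prop :=
  (∀ i, ∑ j, A i j = d) ∧ (∀ j, ∑ i, A i j = d)

/-- A multigraph is simple if all multiplicities are at most one. -/
def IsSimpleG {n m : ℕ} (A : Fin n → Fin m → ℕ) : Prop := ∀ i j, A i j ≤ 1

/-- The simple switching `⟨i,i',j,j'⟩`: replace the edges `(i,j)` and `(i',j')` by
`(i,j')` and `(i',j)`. -/
def switchM {n m : ℕ} (A : Fin n → Fin m → ℕ) (i i' : Fin n) (j j' : Fin m) :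
    Fin n → Fin m → ℕ :=
  fun a b =>
    if a = i ∧ b = j then A a b - 1
    else if a = i' ∧ b = j' then A a b - 1
    else if a = i ∧ b = j' then A a b + 1
    else if a = i' ∧ b = j then A a b + 1
    else A a b

/-- Two multigraphs are adjacent if one is obtained from the other by a simple switching
operated on two non-incident edges. -/
def AdjacentM {n : ℕ} (A B : Fin n → Fin n → ℕ) : Prop :=
  ∃ i i' j j', i ≠ i' ∧ j ≠ j' ∧ 0 < A i j ∧ 0 < A i' j' ∧ B = switchM A i i' j j'

/-- `Cat_{n,d}(k)`: `d`-regular bipartite multigraphs with exactly `k` multiplicity-2 edges,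
no two of them incident, and no multiplicities `≥ 3`. -/
def InCat (n d k : ℕ) (A : Fin n → Fin n → ℕ) : Prop :=
  IsReg n d A ∧ (∀ i j, A i j ≤ 2) ∧
    (Finset.univ.filter fun p : Fin n × Fin n => A p.1 p.2 = 2).card = k ∧
    (∀ i j j', A i j = 2 → A i j' = 2 → j = j') ∧
    (∀ i i' j, A i j = 2 → A i' j = 2 → i = i')

/-- The set of multiedges (multiplicity-2 edges) of a multigraph. -/
def MEs {n : ℕ} (A : Fin n → Fin n → ℕ) : Finset (Fin n × Fin n) :=
  Finset.univ.filter fun p => A p.1 p.2 = 2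

/-- The data of a simple path starting at a multigraph `A ∈ Cat_{n,d}(k)`: to each
multiedge `e = (i_s, j_s)` of `A` it assigns the auxiliary edge `f e = (i'_s, j'_s)` used by
the corresponding simple switching `⟨i_s, i'_s, j_s, j'_s⟩`.  The auxiliary left (resp. right)
vertices are pairwise distinct, avoid all multiedge left (resp. right) vertices, and the
switching creates no multiple edges. -/
def SimplePathData {n : ℕ} (A : Fin n → Fin n → ℕ)
    (f : Fin n × Fin n → Fin n × Fin n) : Prop :=
  (∀ e ∈ MEs A, 0 < A (f e).1 (f e).2 ∧ A (f e).1 e.2 = 0 ∧ A e.1 (f e).2 = 0 ∧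
    ∀ e' ∈ MEs A, (f e).1 ≠ e'.1 ∧ (f e).2 ≠ e'.2) ∧
  ∀ e ∈ MEs A, ∀ e' ∈ MEs A, e ≠ e' → (f e).1 ≠ (f e').1 ∧ (f e).2 ≠ (f e').2

/-- The endpoint of the simple path with data `f` starting at `A`: each multiedge
`(i_s,j_s)` loses one parallel edge, the auxiliary edge `(i'_s,j'_s)` is removed, and the
edges `(i_s,j'_s)` and `(i'_s,j_s)` are added. -/
def endpointM {n : ℕ} (A : Fin n → Fin n → ℕ) (f : Fin n × Fin n → Fin n × Fin n) :
    Fin n → Fin n → ℕ :=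
  fun a b =>
    A a b + ((MEs A).filter fun e => (a = e.1 ∧ b = (f e).2) ∨ (a = (f e).1 ∧ b = e.2)).card
      - ((MEs A).filter fun e => (a = e.1 ∧ b = e.2) ∨ (a = (f e).1 ∧ b = (f e).2)).card

/-- The `s`-neighborhood of a multigraph: all endpoints of simple paths starting at it. -/
def SN {n : ℕ} (A : Fin n → Fin n → ℕ) : Set (Fin n → Fin n → ℕ) :=
  {B | ∃ f, SimplePathData A f ∧ B = endpointM A f}

/-- The anti-expansion measure `Z(G)` of a simple graph. -/
def Zae {n : ℕ} (A : Fin n → Fin n → ℕ) : ℕ :=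
  (Finset.univ.filter fun p : Fin n × Fin n =>
    0 < A p.1 p.2 ∧ ∃ k, k ≠ p.1 ∧ 0 < A k p.2 ∧
      2 ≤ (Finset.univ.filter fun j => 0 < A p.1 j ∧ 0 < A k j).card).card

/-- The set `I(G_h, G_h')` of left vertices used by the simple switchings of the simple
path with data `f` starting at `A`: the multiedge left vertices together with the auxiliary
left vertices. -/
def IsetS {n : ℕ} (A : Fin n → Fin n → ℕ) (f : Fin n × Fin n → Fin n × Fin n) :
    Set (Fin n) :=
  {i | ∃ e ∈ MEs A, i = e.1 ∨ i = (f e).1}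

/-- Validity of a switching datum `s = ((a,b),(a',b'))`, encoding the simple switching
`⟨a,a',b,b'⟩` on a multigraph `A`. -/
def SwOK {n : ℕ} (A : Fin n → Fin n → ℕ)
    (s : (Fin n × Fin n) × (Fin n × Fin n)) : Prop :=
  s.1.1 ≠ s.2.1 ∧ s.1.2 ≠ s.2.2 ∧ 0 < A s.1.1 s.1.2 ∧ 0 < A s.2.1 s.2.2

/-- Application of a switching datum. -/
def applySw {n : ℕ} (A : Fin n → Fin n → ℕ)
    (s : (Fin n × Fin n) × (Fin n × Fin n)) : Fin n → Fin n → ℕ :=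
  switchM A s.1.1 s.2.1 s.1.2 s.2.2

/-- `I(T) = I(G₁,G₁') ∪ I(G₂,G₂')`. -/
def ITot {n : ℕ} (G₁' G₂' : Fin n → Fin n → ℕ)
    (f₁ f₂ : Fin n × Fin n → Fin n × Fin n) : Set (Fin n) :=
  IsetS G₁' f₁ ∪ IsetS G₂' f₂

/-- An `m`-standard edge `e = (i,j)` with respect to the tuple `T = (G₁,G₁',G₂,G₂')`
with path data `f₁, f₂` and (optional) switching `sw` between `G₁'` and `G₂'`. -/
def MStandard {n : ℕ} (G₁ G₁' G₂ G₂' : Fin n → Fin n → ℕ)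
    (f₁ f₂ : Fin n × Fin n → Fin n × Fin n)
    (sw : Option ((Fin n × Fin n) × (Fin n × Fin n)))
    (e : Fin n × Fin n) : Prop :=
  G₁' e.1 e.2 = 2 ∧ G₂' e.1 e.2 = 2 ∧
  (f₁ e).1 ∉ IsetS G₂' f₂ ∧
  (f₂ e).1 ∉ IsetS G₁' f₁ ∧
  G₁ (f₁ e).1 (f₂ e).2 = 0 ∧ G₂ (f₁ e).1 (f₂ e).2 = 0 ∧
  ∀ s, sw = some s →
    s.1.1 ∉ ({e.1, (f₁ e).1, (f₂ e).1} : Set (Fin n)) ∧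
    s.2.1 ∉ ({e.1, (f₁ e).1, (f₂ e).1} : Set (Fin n))

/-- The set `I_ST(T)` of standard left vertices: left vertices of `m`-standard edges and
the associated auxiliary left vertices. -/
def ISTs {n : ℕ} (G₁ G₁' G₂ G₂' : Fin n → Fin n → ℕ)
    (f₁ f₂ : Fin n × Fin n → Fin n × Fin n)
    (sw : Option ((Fin n × Fin n) × (Fin n × Fin n))) : Set (Fin n) :=
  {i | ∃ e, MStandard G₁ G₁' G₂ G₂' f₁ f₂ sw e ∧
    (i = e.1 ∨ i = (f₁ e).1 ∨ i = (f₂ e).1)}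

/-- The switching between `G₁'` and `G₂'` is of type B: it operates on a left vertex of
`I(T)`. -/
def TypeB {n : ℕ} (G₁' G₂' : Fin n → Fin n → ℕ)
    (f₁ f₂ : Fin n × Fin n → Fin n × Fin n)
    (sw : Option ((Fin n × Fin n) × (Fin n × Fin n))) : Prop :=
  ∃ s, sw = some s ∧
    (s.1.1 ∈ ITot G₁' G₂' f₁ f₂ ∨ s.2.1 ∈ ITot G₁' G₂' f₁ f₂)

/-- The set `Ĩ`: the two left vertices of the switching between `G₁'` and `G₂'` if it is of
type B, and `∅` otherwise. -/
def ItildeS {n : ℕ} (G₁' G₂' : Fin n → Fin n → ℕ)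
    (f₁ f₂ : Fin n × Fin n → Fin n × Fin n)
    (sw : Option ((Fin n × Fin n) × (Fin n × Fin n))) : Set (Fin n) :=
  {i | ∃ s, sw = some s ∧
    (s.1.1 ∈ ITot G₁' G₂' f₁ f₂ ∨ s.2.1 ∈ ITot G₁' G₂' f₁ f₂) ∧
    (i = s.1.1 ∨ i = s.2.1)}

/-- The set `I_NS(T)` of non-standard left vertices:
`I_NS(T) = (I(T) \ I_ST(T)) ∪ Ĩ`. -/
def INS {n : ℕ} (G₁ G₁' G₂ G₂' : Fin n → Fin n → ℕ)
    (f₁ f₂ : Fin n × Fin n → Fin n × Fin n)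
    (sw : Option ((Fin n × Fin n) × (Fin n × Fin n))) : Set (Fin n) :=
  (ITot G₁' G₂' f₁ f₂ \ ISTs G₁ G₁' G₂ G₂' f₁ f₂ sw) ∪ ItildeS G₁' G₂' f₁ f₂ sw

/-- Two left vertices are paired if they are operated on together by one of the relevant
simple switchings (a switching of the simple path from `G₁'` to `G₁`, of the simple path
from `G₂'` to `G₂`, or the switching connecting `G₁'` and `G₂'`). -/
def SwPairRel {n : ℕ} (G₁' G₂' : Fin n → Fin n → ℕ)
    (f₁ f₂ : Fin n × Fin n → Fin n × Fin n)
    (sw : Option ((Fin n × Fin n) × (Fin n × Fin n)))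
    (i i' : Fin n) : Prop :=
  (∃ e ∈ MEs G₁', (i = e.1 ∧ i' = (f₁ e).1) ∨ (i' = e.1 ∧ i = (f₁ e).1)) ∨
  (∃ e ∈ MEs G₂', (i = e.1 ∧ i' = (f₂ e).1) ∨ (i' = e.1 ∧ i = (f₂ e).1)) ∨
  (∃ s, sw = some s ∧ ((i = s.1.1 ∧ i' = s.2.1) ∨ (i = s.2.1 ∧ i' = s.1.1)))

/-- The pairing relation restricted to the non-standard set `I_NS(T)`. -/
def SwPairNS {n : ℕ} (G₁ G₁' G₂ G₂' : Fin n → Fin n → ℕ)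
    (f₁ f₂ : Fin n × Fin n → Fin n × Fin n)
    (sw : Option ((Fin n × Fin n) × (Fin n × Fin n)))
    (i i' : Fin n) : Prop :=
  SwPairRel G₁' G₂' f₁ f₂ sw i i' ∧
    i ∈ INS G₁ G₁' G₂ G₂' f₁ f₂ sw ∧ i' ∈ INS G₁ G₁' G₂ G₂' f₁ f₂ sw

/-- The element of the canonical partition of `I_NS(T)` containing the left vertex `i₀`:
the connected component of `i₀` under the pairing relation. -/
def BlockOf {n : ℕ} (G₁ G₁' G₂ G₂' : Fin n → Fin n → ℕ)
    (f₁ f₂ : Fin n × Fin n → Fin n × Fin n)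
    (sw : Option ((Fin n × Fin n) × (Fin n × Fin n)))
    (i₀ : Fin n) : Set (Fin n) :=
  {x | Relation.EqvGen (SwPairNS G₁ G₁' G₂ G₂' f₁ f₂ sw) i₀ x}

/-- The set `Y` of left vertices employed by the switching connecting `G₁'` and `G₂'`. -/
def Ysw {n : ℕ} (sw : Option ((Fin n × Fin n) × (Fin n × Fin n))) : Set (Fin n) :=
  {i | ∃ s, sw = some s ∧ (i = s.1.1 ∨ i = s.2.1)}

/-- The number of multiedges of `A` incident to the set `W` of left vertices. -/
noncomputable def MCount {n : ℕ} (A : Fin n → Fin n → ℕ) (W : Set (Fin n)) : ℕ :=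
  ({e : Fin n × Fin n | A e.1 e.2 = 2 ∧ e.1 ∈ W} : Set (Fin n × Fin n)).ncard
section AuxGraph
open Relation List

theorem chain_pred {α : Type*} (R : α → α → Prop) :
    ∀ (l : List α) (a : α), l ≠ [] → List.Chain R a l →
      ∃ y l', l'.length + 1 = l.length ∧ List.Chain R a l' ∧
        (a :: l').getLast (List.cons_ne_nil _ _) = y ∧
        R y ((a :: l).getLast (List.cons_ne_nil _ _))
  | [], _, h, _ => absurd rfl h
  | [b], a, _, hc => ⟨a, [], rfl, .nil, by simp, (List.chain_cons.mp hc).1⟩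
  | b :: c :: t, a, _, hc => by
    obtain ⟨hab, hbc⟩ := List.chain_cons.mp hc
    obtain ⟨y, l', hlen, hch, hlast, hR⟩ := chain_pred R (c :: t) b (by simp) hbc
    refine ⟨y, b :: l', by simp [← hlen], List.chain_cons.mpr ⟨hab, hch⟩, ?_, ?_⟩
    · rw [List.getLast_cons (List.cons_ne_nil _ _)]; exact hlast
    · rw [List.getLast_cons (List.cons_ne_nil _ _)]; exact hR

/-- Spanning-tree bound: the component of `a` has at most `#edges + 1` elements. -/
theorem comp_bound {α : Type*} [Finite α] (R : α → α → Prop) (a : α)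
    {ι : Type*} (E : Set ι) (hE : E.Finite) (ends : ι → α × α)
    (hcover : ∀ x y, Relation.ReflTransGen R a x → Relation.ReflTransGen R a y →
      R y x → ∃ i ∈ E, ends i = (y, x) ∨ ends i = (x, y))
    (hne : ∀ i ∈ E, (ends i).1 ≠ (ends i).2) :
    {x | Relation.ReflTransGen R a x}.ncard ≤ E.ncard + 1 := by
  classical
  set W : Set α := {x | Relation.ReflTransGen R a x} with hWdef
  have haW : a ∈ W := Relation.ReflTransGen.refl
  -- distance function
  have hdex : ∀ x ∈ W, ∃ m : ℕ, ∃ l : List α, l.length = m ∧ List.Chain R a l ∧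
      (a :: l).getLast (List.cons_ne_nil _ _) = x := by
    intro x hx
    obtain ⟨l, hc, hl⟩ := List.exists_isChain_cons_of_relationReflTransGen hx
    exact ⟨l.length, l, rfl, hc, hl⟩
  let d : α → ℕ := fun x =>
    if h : ∃ m : ℕ, ∃ l : List α, l.length = m ∧ List.Chain R a l ∧
        (a :: l).getLast (List.cons_ne_nil _ _) = x then Nat.find h else 0
  -- step lemma
  have hstep : ∀ x ∈ W, x ≠ a → ∃ y ∈ W, R y x ∧ d y < d x := by
    intro x hx hxa
    have hex := hdex x hx
    obtain ⟨l, hlen, hchain, hlast⟩ := Nat.find_spec hex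
    have hlne : l ≠ [] := by
      rintro rfl; exact hxa (by simpa using hlast.symm)
    obtain ⟨y, l', hl'len, hch', hlast', hR⟩ := chain_pred R l a hlne hchain
    rw [hlast] at hR
    have hyW : y ∈ W := List.relationReflTransGen_of_exists_isChain_cons l' hch' hlast'
    refine ⟨y, hyW, hR, ?_⟩
    have hexy := hdex y hyW
    have hdy : d y = Nat.find hexy := by simp only [d, dif_pos hexy]
    have hdx : d x = Nat.find hex := by simp only [d, dif_pos hex]
    rw [hdy, hdx]
    have h1 : Nat.find hexy ≤ l'.length := Nat.find_min' hexy ⟨l', rfl, hch', hlast'⟩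
    omega
  -- the injection
  rcases (W \ {a}).eq_empty_or_nonempty with hWe | ⟨x₀, hx₀⟩
  · have : W ⊆ {a} := by
      intro x hx
      by_contra hxa
      exact (Set.eq_empty_iff_forall_notMem.mp hWe) x ⟨hx, hxa⟩
    calc W.ncard ≤ ({a} : Set α).ncard := Set.ncard_le_ncard this (Set.toFinite _)
      _ = 1 := Set.ncard_singleton a
      _ ≤ E.ncard + 1 := by omega
  · have key : ∀ x ∈ W \ {a}, ∃ i ∈ E, ∃ y, d y < d x ∧
        (ends i = (y, x) ∨ ends i = (x, y)) := by
      rintro x ⟨hxW, hxa⟩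
      obtain ⟨y, hyW, hR, hd⟩ := hstep x hxW (by simpa using hxa)
      obtain ⟨i, hiE, hor⟩ := hcover x y hxW hyW hR
      exact ⟨i, hiE, y, hd, hor⟩
    obtain ⟨j₀, hj₀, -⟩ := key x₀ hx₀
    let f : α → ι := fun x => if h : x ∈ W \ {a} then (key x h).choose else j₀
    have hfE : ∀ x ∈ W \ {a}, f x ∈ E := by
      intro x hx
      simp only [f, dif_pos hx]
      exact (key x hx).choose_spec.1
    have hfprop : ∀ x (hx : x ∈ W \ {a}), ∃ y, d y < d x ∧
        (ends (f x) = (y, x) ∨ ends (f x) = (x, y)) := by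
      intro x hx
      simp only [f, dif_pos hx]
      exact (key x hx).choose_spec.2
    have hinj : Set.InjOn f (W \ {a}) := by
      intro x hx z hz hfxz
      by_contra hne'
      obtain ⟨y, hdy, hory⟩ := hfprop x hx
      obtain ⟨y', hdy', hory'⟩ := hfprop z hz
      rw [hfxz] at hory
      rcases hory with h1 | h1 <;> rcases hory' with h2 | h2 <;> rw [h2] at h1
      · injection h1 with e1 e2; exact hne' e2.symm
      · injection h1 with e1 e2; subst e1; subst e2; omega
      · injection h1 with e1 e2; subst e1; subst e2; omega
      · injection h1 with e1 e2; exact hne' e1.symm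
    have hcard : (W \ {a}).ncard ≤ E.ncard :=
      Set.ncard_le_ncard_of_injOn f hfE hinj hE
    have : (W \ {a}).ncard + 1 = W.ncard :=
      Set.ncard_diff_singleton_add_one haW (Set.toFinite _)
    omega


theorem eqv_iff_rtg {α : Type*} {R : α → α → Prop} (hs : Symmetric R) {a b : α} :
    Relation.EqvGen R a b ↔ Relation.ReflTransGen R a b := by
  constructor
  · intro h
    induction h with
    | rel x y h => exact .single h
    | refl x => exact .refl
    | symm x y _ ih => exact (@Relation.ReflTransGen.symmetric _ _ ⟨fun _ _ h => hs h⟩).symm _ _ ih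
    | trans x y z _ _ ih1 ih2 => exact ih1.trans ih2
  · intro h
    induction h with
    | refl => exact .refl _
    | tail _ h ih => exact ih.trans _ _ _ (.rel _ _ h)

end AuxGraph

/-- Structure of the canonical partition for tuples of type 1 or 2:
for any element `W` of the canonical partition of `I_NS(T)`, with `M¹, M²` the numbers of
multiedges of `G₁', G₂'` incident to `W` and `Y` the vertex set of the switching between
`G₁'` and `G₂'`: if `Y ∩ W = ∅` then `M¹ = M²` and `max(|W|−2,1) ≤ 2M¹−1`;
if `Y ∩ W ≠ ∅` then `Y ⊆ W` and `|W| ≤ 2 + M¹ + M²`; in either case `|W| ≤ 2 + M¹ + M²`. -/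
theorem stmt15 (n d k₁ k₂ : ℕ) (hk₁ : 1 ≤ k₁) (hk₂ : 1 ≤ k₂)
    (G₁ G₁' G₂ G₂' : Fin n → Fin n → ℕ)
    (f₁ f₂ : Fin n × Fin n → Fin n × Fin n)
    (sw : Option ((Fin n × Fin n) × (Fin n × Fin n)))
    (hc₁ : InCat n d k₁ G₁') (hc₂ : InCat n d k₂ G₂')
    (hp₁ : SimplePathData G₁' f₁) (he₁ : endpointM G₁' f₁ = G₁)
    (hp₂ : SimplePathData G₂' f₂) (he₂ : endpointM G₂' f₂ = G₂)
    (hsw : match sw with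
      | none => G₁' = G₂'
      | some s => SwOK G₁' s ∧ G₂' = applySw G₁' s)
    (i₀ : Fin n) (hi₀ : i₀ ∈ INS G₁ G₁' G₂ G₂' f₁ f₂ sw)
    (W : Set (Fin n)) (hW : W = BlockOf G₁ G₁' G₂ G₂' f₁ f₂ sw i₀) :
    ((∀ i ∈ Ysw sw, i ∉ W) →
        MCount G₁' W = MCount G₂' W ∧
        max ((W.ncard : ℤ) - 2) 1 ≤ 2 * (MCount G₁' W : ℤ) - 1) ∧
    ((∃ i ∈ Ysw sw, i ∈ W) →
        Ysw sw ⊆ W ∧ (W.ncard : ℤ) ≤ 2 + (MCount G₁' W : ℤ) + (MCount G₂' W : ℤ)) ∧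
    (W.ncard : ℤ) ≤ 2 + (MCount G₁' W : ℤ) + (MCount G₂' W : ℤ) := by
  
  classical
  set R := SwPairNS G₁ G₁' G₂ G₂' f₁ f₂ sw with hRdef
  have hMEs : ∀ (A : Fin n → Fin n → ℕ) (e : Fin n × Fin n),
      e ∈ MEs A ↔ A e.1 e.2 = 2 := by
    intro A e; simp [MEs]
  have hsymm : Symmetric R := by
    rintro i i' ⟨hrel, h1, h2⟩
    refine ⟨?_, h2, h1⟩
    rcases hrel with ⟨e, he, h⟩ | ⟨e, he, h⟩ | ⟨s, hs, h⟩
    · exact Or.inl ⟨e, he, h.symm⟩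
    · exact Or.inr (Or.inl ⟨e, he, h.symm⟩)
    · rcases h with ⟨a, b⟩ | ⟨a, b⟩
      · exact Or.inr (Or.inr ⟨s, hs, Or.inr ⟨b, a⟩⟩)
      · exact Or.inr (Or.inr ⟨s, hs, Or.inl ⟨b, a⟩⟩)
  have hWm : ∀ x, x ∈ W ↔ Relation.EqvGen R i₀ x := by
    intro x; rw [hW]; exact Iff.rfl
  have hi₀W : i₀ ∈ W := (hWm i₀).mpr (Relation.EqvGen.refl i₀)
  have hWset : W = {x | Relation.ReflTransGen R i₀ x} :=
    Set.ext fun x => (hWm x).trans (eqv_iff_rtg hsymm)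
  -- membership of component elements in INS
  have hINSmem : ∀ u v, Relation.EqvGen R u v → u = v ∨
      (u ∈ INS G₁ G₁' G₂ G₂' f₁ f₂ sw ∧ v ∈ INS G₁ G₁' G₂ G₂' f₁ f₂ sw) := by
    intro u v h
    induction h with
    | rel x y h => exact Or.inr ⟨h.2.1, h.2.2⟩
    | refl x => exact Or.inl rfl
    | symm x y _ ih => tauto
    | trans x y z _ _ ih1 ih2 => rcases ih1 with rfl | h1 <;> rcases ih2 with rfl | h2 <;> tauto
  have hWINS : ∀ x ∈ W, x ∈ INS G₁ G₁' G₂ G₂' f₁ f₂ sw := by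
    intro x hx
    rcases hINSmem i₀ x ((hWm x).mp hx) with h | h
    · exact h ▸ hi₀
    · exact h.2
  -- sw dichotomy
  have hcases : (sw = none ∧ G₁' = G₂') ∨
      (∃ s, sw = some s ∧ SwOK G₁' s ∧ G₂' = applySw G₁' s) := by
    cases hs : sw with
    | none => rw [hs] at hsw; exact Or.inl ⟨rfl, hsw⟩
    | some s => rw [hs] at hsw; exact Or.inr ⟨s, rfl, hsw.1, hsw.2⟩
  -- rows agree off Y
  have hrow : ∀ a, a ∉ Ysw sw → ∀ b, G₂' a b = G₁' a b := by
    intro a ha b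
    rcases hcases with ⟨_, h⟩ | ⟨s, hss, hok, hG⟩
    · rw [h]
    · have h1 : ¬ a = s.1.1 := fun h => ha ⟨s, hss, Or.inl h⟩
      have h2 : ¬ a = s.2.1 := fun h => ha ⟨s, hss, Or.inr h⟩
      rw [hG]
      simp [applySw, switchM, h1, h2]
  -- the multiedge sets
  set T₁ : Set (Fin n × Fin n) := {e | G₁' e.1 e.2 = 2 ∧ e.1 ∈ W} with hT₁def
  set T₂ : Set (Fin n × Fin n) := {e | G₂' e.1 e.2 = 2 ∧ e.1 ∈ W} with hT₂def
  have hM1 : MCount G₁' W = T₁.ncard := rfl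
  have hM2 : MCount G₂' W = T₂.ncard := rfl
  -- edge data
  set Esw : Set Unit := {_u | ∃ s, sw = some s ∧ s.1.1 ∈ W ∧ s.2.1 ∈ W} with hEswdef
  set p : Fin n × Fin n := sw.elim (i₀, i₀) (fun s => (s.1.1, s.2.1)) with hpdef
  have hp : ∀ s, sw = some s → p = (s.1.1, s.2.1) := by
    intro s hss; rw [hpdef, hss]; rfl
  set E : Set ((Fin n × Fin n) ⊕ ((Fin n × Fin n) ⊕ Unit)) :=
    Sum.inl '' T₁ ∪ Sum.inr '' (Sum.inl '' T₂ ∪ Sum.inr '' Esw) with hEdef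
  set ends : ((Fin n × Fin n) ⊕ ((Fin n × Fin n) ⊕ Unit)) → Fin n × Fin n :=
    Sum.elim (fun e => (e.1, (f₁ e).1))
      (Sum.elim (fun e => (e.1, (f₂ e).1)) (fun _ => p)) with hendsdef
  have hcover : ∀ x y, Relation.ReflTransGen R i₀ x → Relation.ReflTransGen R i₀ y →
      R y x → ∃ i ∈ E, ends i = (y, x) ∨ ends i = (x, y) := by
    intro x y hx hy hRyx
    have hxW : x ∈ W := by rw [hWset]; exact hx
    have hyW : y ∈ W := by rw [hWset]; exact hy
    obtain ⟨hrel, -, -⟩ := hRyx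
    rcases hrel with ⟨e, he, h⟩ | ⟨e, he, h⟩ | ⟨s, hss, h⟩
    · refine ⟨Sum.inl e, Or.inl ⟨e, ⟨(hMEs _ _).mp he, ?_⟩, rfl⟩, ?_⟩
      · rcases h with ⟨h1, _⟩ | ⟨h1, _⟩
        · exact h1 ▸ hyW
        · exact h1 ▸ hxW
      · rcases h with ⟨h1, h2⟩ | ⟨h1, h2⟩
        · exact Or.inl (by simp [hendsdef, ← h1, ← h2])
        · exact Or.inr (by simp [hendsdef, ← h1, ← h2])
    · refine ⟨Sum.inr (Sum.inl e), Or.inr ⟨Sum.inl e, Or.inl ⟨e, ⟨(hMEs _ _).mp he, ?_⟩, rfl⟩, rfl⟩, ?_⟩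
      · rcases h with ⟨h1, _⟩ | ⟨h1, _⟩
        · exact h1 ▸ hyW
        · exact h1 ▸ hxW
      · rcases h with ⟨h1, h2⟩ | ⟨h1, h2⟩
        · exact Or.inl (by simp [hendsdef, ← h1, ← h2])
        · exact Or.inr (by simp [hendsdef, ← h1, ← h2])
    · have h11 : s.1.1 ∈ W ∧ s.2.1 ∈ W := by
        rcases h with ⟨h1, h2⟩ | ⟨h1, h2⟩
        · exact ⟨h1 ▸ hyW, h2 ▸ hxW⟩
        · exact ⟨h2 ▸ hxW, h1 ▸ hyW⟩
      refine ⟨Sum.inr (Sum.inr ()), Or.inr ⟨Sum.inr (), Or.inr ⟨(), ⟨s, hss, h11⟩, rfl⟩, rfl⟩, ?_⟩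
      have hpe : ends (Sum.inr (Sum.inr ())) = (s.1.1, s.2.1) := by
        simp [hendsdef, hp s hss]
      rcases h with ⟨h1, h2⟩ | ⟨h1, h2⟩
      · exact Or.inl (by rw [hpe, ← h1, ← h2])
      · exact Or.inr (by rw [hpe, ← h1, ← h2])
  have hne : ∀ i ∈ E, (ends i).1 ≠ (ends i).2 := by
    rintro i hi
    rcases hi with ⟨e, heT, rfl⟩ | ⟨j, hj, rfl⟩
    · have heM : e ∈ MEs G₁' := (hMEs _ _).mpr heT.1
      have := ((hp₁.1 e heM).2.2.2 e heM).1
      simpa [hendsdef] using this.symm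
    · rcases hj with ⟨e, heT, rfl⟩ | ⟨u, huE, rfl⟩
      · have heM : e ∈ MEs G₂' := (hMEs _ _).mpr heT.1
        have := ((hp₂.1 e heM).2.2.2 e heM).1
        simpa [hendsdef] using this.symm
      · obtain ⟨s, hss, -, -⟩ := huE
        rcases hcases with ⟨hn, -⟩ | ⟨s', hss', hok, -⟩
        · rw [hn] at hss; exact absurd hss (by simp)
        · have hs' : s' = s := by rw [hss] at hss'; exact (Option.some_inj.mp hss').symm
          subst hs'
          have hpe : ends (Sum.inr (Sum.inr u)) = (s'.1.1, s'.2.1) := by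
            simp [hendsdef, hp s' hss]
          rw [hpe]
          exact hok.1
  have hbound := comp_bound R i₀ E (Set.toFinite E) ends hcover hne
  rw [← hWset] at hbound
  have hEcard : E.ncard ≤ T₁.ncard + T₂.ncard + Esw.ncard := by
    calc E.ncard ≤ (Sum.inl '' T₁).ncard + (Sum.inr '' (Sum.inl '' T₂ ∪ Sum.inr '' Esw)).ncard :=
          Set.ncard_union_le _ _
      _ = T₁.ncard + (Sum.inl '' T₂ ∪ Sum.inr '' Esw).ncard := by
          rw [Set.ncard_image_of_injective _ Sum.inl_injective,
            Set.ncard_image_of_injective _ Sum.inr_injective]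
      _ ≤ T₁.ncard + ((Sum.inl '' T₂).ncard + (Sum.inr '' Esw).ncard) :=
          Nat.add_le_add_left (Set.ncard_union_le _ _) _
      _ = T₁.ncard + (T₂.ncard + Esw.ncard) := by
          rw [Set.ncard_image_of_injective _ Sum.inl_injective,
            Set.ncard_image_of_injective _ Sum.inr_injective]
      _ = T₁.ncard + T₂.ncard + Esw.ncard := by ring
  have hEsw1 : Esw.ncard ≤ 1 := by
    calc Esw.ncard ≤ (Set.univ : Set Unit).ncard :=
          Set.ncard_le_ncard (Set.subset_univ _) (Set.toFinite _)
      _ = 1 := by rw [Set.ncard_univ]; simp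
  have hgenN : W.ncard ≤ T₁.ncard + T₂.ncard + 2 := by omega
  -- Case 1 extras
  have case1 : (∀ i ∈ Ysw sw, i ∉ W) →
      T₁ = T₂ ∧ W.ncard ≤ T₁.ncard + T₂.ncard + 1 ∧ 1 ≤ T₁.ncard := by
    intro hY
    have hWnotY : ∀ a, a ∈ W → a ∉ Ysw sw := fun a haW haY => hY a haY haW
    have hT12 : T₁ = T₂ := by
      ext e
      simp only [hT₁def, hT₂def, Set.mem_setOf_eq]
      constructor
      · rintro ⟨h1, h2⟩
        exact ⟨by rw [hrow e.1 (hWnotY e.1 h2)]; exact h1, h2⟩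
      · rintro ⟨h1, h2⟩
        exact ⟨by rw [← hrow e.1 (hWnotY e.1 h2)]; exact h1, h2⟩
    have hEsw0 : Esw = ∅ := by
      ext u
      simp only [hEswdef, Set.mem_setOf_eq, Set.mem_empty_iff_false, iff_false]
      rintro ⟨s, hss, h1, h2⟩
      exact hY s.1.1 ⟨s, hss, Or.inl rfl⟩ h1
    have hEsw0' : Esw.ncard = 0 := by rw [hEsw0]; exact Set.ncard_empty _
    refine ⟨hT12, by omega, ?_⟩
    -- T₁ is nonempty
    have hT1ne : T₁.Nonempty := by
      have hItY : ∀ x, x ∈ ItildeS G₁' G₂' f₁ f₂ sw → x ∈ Ysw sw := by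
        rintro x ⟨s, hss, -, hor⟩; exact ⟨s, hss, hor⟩
      rcases id hi₀ with ⟨hIT, hNST⟩ | hIt
      swap
      · exact absurd hi₀W (hY i₀ (hItY i₀ hIt))
      rcases hIT with ⟨e, he, hor⟩ | ⟨e, he, hor⟩
      · -- e ∈ MEs G₁'
        rcases hor with h1 | h1
        · exact ⟨e, (hMEs _ _).mp he, h1 ▸ hi₀W⟩
        · have he1NS : e.1 ∈ INS G₁ G₁' G₂ G₂' f₁ f₂ sw := by
            left
            refine ⟨Or.inl ⟨e, he, Or.inl rfl⟩, ?_⟩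
            rintro ⟨e', hstd, h' | h' | h'⟩
            · have heM : G₁' e.1 e.2 = 2 := (hMEs _ _).mp he
              have he'M : G₁' e.1 e'.2 = 2 := by rw [h']; exact hstd.1
              have h2 : e.2 = e'.2 := hc₁.2.2.2.1 e.1 e.2 e'.2 heM he'M
              have hee : e = e' := Prod.ext h' h2
              exact hNST ⟨e, hee ▸ hstd, Or.inr (Or.inl h1)⟩
            · exact ((hp₁.1 e' (by rw [hMEs]; exact hstd.1)).2.2.2 e he).1 h'.symm
            · exact hstd.2.2.2.1 (by rw [← h']; exact ⟨e, he, Or.inl rfl⟩)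
          have hRe : R i₀ e.1 := ⟨Or.inl ⟨e, he, Or.inr ⟨rfl, h1⟩⟩, hi₀, he1NS⟩
          exact ⟨e, (hMEs _ _).mp he, (hWm e.1).mpr (Relation.EqvGen.rel _ _ hRe)⟩
      · -- e ∈ MEs G₂'
        have key : e.1 ∈ W → e ∈ T₁ := by
          intro hmem
          have : G₁' e.1 e.2 = 2 := by
            rw [← hrow e.1 (hWnotY e.1 hmem)]; exact (hMEs _ _).mp he
          exact ⟨this, hmem⟩
        rcases hor with h1 | h1
        · exact ⟨e, key (h1 ▸ hi₀W)⟩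
        · have he1NS : e.1 ∈ INS G₁ G₁' G₂ G₂' f₁ f₂ sw := by
            left
            refine ⟨Or.inr ⟨e, he, Or.inl rfl⟩, ?_⟩
            rintro ⟨e', hstd, h' | h' | h'⟩
            · have heM : G₂' e.1 e.2 = 2 := (hMEs _ _).mp he
              have he'M : G₂' e.1 e'.2 = 2 := by rw [h']; exact hstd.2.1
              have h2 : e.2 = e'.2 := hc₂.2.2.2.1 e.1 e.2 e'.2 heM he'M
              have hee : e = e' := Prod.ext h' h2
              exact hNST ⟨e, hee ▸ hstd, Or.inr (Or.inr h1)⟩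
            · exact hstd.2.2.1 (by rw [← h']; exact ⟨e, he, Or.inl rfl⟩)
            · exact ((hp₂.1 e' (by rw [hMEs]; exact hstd.2.1)).2.2.2 e he).1 h'.symm
          have hRe : R i₀ e.1 := ⟨Or.inr (Or.inl ⟨e, he, Or.inr ⟨rfl, h1⟩⟩), hi₀, he1NS⟩
          exact ⟨e, key ((hWm e.1).mpr (Relation.EqvGen.rel _ _ hRe))⟩
    rw [← Set.ncard_pos (Set.toFinite _)] at hT1ne
    omega
  -- Case 2: Y meets W
  have case2 : (∃ i ∈ Ysw sw, i ∈ W) → Ysw sw ⊆ W := by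
    rintro ⟨i, ⟨s, hss, hior⟩, hiW⟩
    have hiNS := hWINS i hiW
    have hcond : s.1.1 ∈ ITot G₁' G₂' f₁ f₂ ∨ s.2.1 ∈ ITot G₁' G₂' f₁ f₂ := by
      rcases hiNS with ⟨hIT, -⟩ | ⟨s', hs', hcond', -⟩
      · rcases hior with h | h
        · exact Or.inl (h ▸ hIT)
        · exact Or.inr (h ▸ hIT)
      · have hs'' : s' = s := by rw [hss] at hs'; exact (Option.some_inj.mp hs').symm
        exact hs'' ▸ hcond'
    have hNS1 : s.1.1 ∈ INS G₁ G₁' G₂ G₂' f₁ f₂ sw := Or.inr ⟨s, hss, hcond, Or.inl rfl⟩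
    have hNS2 : s.2.1 ∈ INS G₁ G₁' G₂ G₂' f₁ f₂ sw := Or.inr ⟨s, hss, hcond, Or.inr rfl⟩
    have hR12 : R s.1.1 s.2.1 := ⟨Or.inr (Or.inr ⟨s, hss, Or.inl ⟨rfl, rfl⟩⟩), hNS1, hNS2⟩
    have hboth : s.1.1 ∈ W ∧ s.2.1 ∈ W := by
      rcases hior with h | h
      · rw [h] at hiW
        exact ⟨hiW, (hWm _).mpr (Relation.EqvGen.trans _ _ _ ((hWm _).mp hiW)
          (Relation.EqvGen.rel _ _ hR12))⟩
      · rw [h] at hiW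
        exact ⟨(hWm _).mpr (Relation.EqvGen.trans _ _ _ ((hWm _).mp hiW)
          (Relation.EqvGen.rel _ _ (hsymm hR12))), hiW⟩
    rintro j ⟨s', hs', hor⟩
    have hs'' : s' = s := by rw [hss] at hs'; exact (Option.some_inj.mp hs').symm
    subst hs''
    rcases hor with h | h
    · exact h ▸ hboth.1
    · exact h ▸ hboth.2
  -- assemble
  refine ⟨?_, ?_, ?_⟩
  · intro hY
    obtain ⟨hT12, hb, h1⟩ := case1 hY
    have hMeq : MCount G₁' W = MCount G₂' W := by rw [hM1, hM2, hT12]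
    refine ⟨hMeq, max_le ?_ ?_⟩
    · rw [hM1]
      have : W.ncard ≤ 2 * T₁.ncard + 1 := by rw [hT12] at hb ⊢; omega
      push_cast
      omega
    · rw [hM1]
      push_cast
      omega
  · intro hex
    refine ⟨case2 hex, ?_⟩
    rw [hM1, hM2]
    push_cast
    omega
  · rw [hM1, hM2]
    push_cast
    omega
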